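/- For every a ∈ ℝ² and every integer k ≥ 2, N_k(Σ₂, a) ≤ 8k − 12, where Σ₂ = {A₁, A₄}; consequently there exist α > 0 and a natural number k₀ such that N_k(Σ₂, a) ≤ α·k for all a ∈ ℝ² and all integers k ≥ k₀. -/

import Mathlib

open Matrix Set

noncomputable section

/-- `XSeq S a k` is the set of all vectors `T_{k-1} ⋯ T_0 · a` with each `T_j ∈ S`
(and `XSeq S a 0 = {a}`). -/
def XSeq {n : ℕ} (S : Set (Matrix (Fin n) (Fin n) ℝ)) (a : Fin n → ℝ) : ℕ → Set (Fin n → ℝ)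
  | 0 => {a}
  | k + 1 => ⋃ A ∈ S, A.mulVec '' XSeq S a k

/-- `PHull S a k` is the convex hull of `XSeq S a k`. -/
def PHull {n : ℕ} (S : Set (Matrix (Fin n) (Fin n) ℝ)) (a : Fin n → ℝ) (k : ℕ) :
    Set (Fin n → ℝ) :=
  convexHull ℝ (XSeq S a k)

/-- `EPts S a k` is the set of extreme points of `PHull S a k`. -/
def EPts {n : ℕ} (S : Set (Matrix (Fin n) (Fin n) ℝ)) (a : Fin n → ℝ) (k : ℕ) :
    Set (Fin n → ℝ) :=
  Set.extremePoints ℝ (PHull S a k)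

/-- `NExt S a k` is the number of extreme points of `PHull S a k`. -/
def NExt {n : ℕ} (S : Set (Matrix (Fin n) (Fin n) ℝ)) (a : Fin n → ℝ) (k : ℕ) : ℕ :=
  (EPts S a k).ncard

def M1 : Matrix (Fin 2) (Fin 2) ℝ := !![0, 1; 1, 0]
def M2 : Matrix (Fin 2) (Fin 2) ℝ := !![1, 1; 0, 1]
def M3 : Matrix (Fin 2) (Fin 2) ℝ := !![1, 0; 1, 1]
def M4 : Matrix (Fin 2) (Fin 2) ℝ := !![1, 1; 1, 0]
def M5 : Matrix (Fin 2) (Fin 2) ℝ := !![0, 1; 1, 1]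

/-! ### Auxiliary machinery

We prove `N_{k+1} ≤ N_k + 2` using the factorisation `A₄ = M2 · A₁`, so that
`X_{k+1} = Y ∪ Sh '' Y` where `Y = A₁ '' X_k` and `Sh` is the shear `M2.mulVec`.
The key geometric fact is that for a shear, at most two extreme points `v` of
`conv (Y ∪ Sh '' Y)` can have `Sh v` extreme as well. -/

local notation "Pt" => (Fin 2 → ℝ)

/-- The shear map. -/
def Sh : Pt → Pt := M2.mulVec

lemma Sh_apply0 (v : Pt) : Sh v 0 = v 0 + v 1 := by
  simp [Sh, M2, Matrix.mulVec, dotProduct, Fin.sum_univ_two]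

lemma Sh_apply1 (v : Pt) : Sh v 1 = v 1 := by
  simp [Sh, M2, Matrix.mulVec, dotProduct, Fin.sum_univ_two]

lemma M1_mulVec0 (v : Pt) : M1.mulVec v 0 = v 1 := by
  simp [M1, Matrix.mulVec, dotProduct, Fin.sum_univ_two]

lemma M1_mulVec1 (v : Pt) : M1.mulVec v 1 = v 0 := by
  simp [M1, Matrix.mulVec, dotProduct, Fin.sum_univ_two]

lemma M4_mulVec0 (v : Pt) : M4.mulVec v 0 = v 0 + v 1 := by
  simp [M4, Matrix.mulVec, dotProduct, Fin.sum_univ_two]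

lemma M4_mulVec1 (v : Pt) : M4.mulVec v 1 = v 0 := by
  simp [M4, Matrix.mulVec, dotProduct, Fin.sum_univ_two]

lemma pt_coord_add_smul (c d : ℝ) (p r : Pt) (j : Fin 2) :
    (c • p + d • r) j = c * p j + d * r j := by
  simp [Pi.add_apply, Pi.smul_apply, smul_eq_mul]

lemma pt_ext {p q : Pt} (h0 : p 0 = q 0) (h1 : p 1 = q 1) : p = q := by
  funext i
  have : i = 0 ∨ i = 1 := by omega
  rcases this with h | h <;> rw [h] <;> assumption

lemma M4_decomp (v : Pt) : M4.mulVec v = Sh (M1.mulVec v) :=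
  pt_ext (by rw [M4_mulVec0, Sh_apply0, M1_mulVec0, M1_mulVec1]; ring)
    (by rw [M4_mulVec1, Sh_apply1, M1_mulVec1])

/-- The shear as a linear equivalence. -/
def shEquiv : Pt ≃ₗ[ℝ] Pt :=
{ toFun := Sh
  map_add' := fun x y => Matrix.mulVec_add _ _ _
  map_smul' := fun c x => by simp [Sh, Matrix.mulVec_smul]
  invFun := fun v => ![v 0 - v 1, v 1]
  left_inv := fun v => pt_ext (by simp [Sh_apply0, Sh_apply1]) (by simp [Sh_apply1])
  right_inv := fun v => by
    refine pt_ext ?_ ?_ <;> simp [Sh_apply0, Sh_apply1] }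

/-- The swap as a linear equivalence. -/
def swEquiv : Pt ≃ₗ[ℝ] Pt :=
{ toFun := M1.mulVec
  map_add' := fun x y => Matrix.mulVec_add _ _ _
  map_smul' := fun c x => by simp [Matrix.mulVec_smul]
  invFun := M1.mulVec
  left_inv := fun v => pt_ext (by simp only [M1_mulVec0, M1_mulVec1]) (by simp only [M1_mulVec0, M1_mulVec1])
  right_inv := fun v =>
    pt_ext (by simp only [M1_mulVec0, M1_mulVec1]) (by simp only [M1_mulVec0, M1_mulVec1]) }

lemma Sh_inj : Function.Injective Sh := shEquiv.injective

lemma horiz_openSegment {p q r : Pt} (h1 : p 1 = q 1) (h2 : r 1 = q 1)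
    (hpq : p 0 < q 0) (hqr : q 0 < r 0) : q ∈ openSegment ℝ p r := by
  have hd : (0:ℝ) < r 0 - p 0 := by linarith
  have hd' : r 0 - p 0 ≠ 0 := ne_of_gt hd
  have ha : (0:ℝ) < (r 0 - q 0) / (r 0 - p 0) := div_pos (by linarith) hd
  have hb : (0:ℝ) < (q 0 - p 0) / (r 0 - p 0) := div_pos (by linarith) hd
  have hab : (r 0 - q 0) / (r 0 - p 0) + (q 0 - p 0) / (r 0 - p 0) = 1 := by
    field_simp
    ring
  refine ⟨_, _, ha, hb, hab, pt_ext ?_ ?_⟩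
  · rw [pt_coord_add_smul]; field_simp; ring
  · rw [pt_coord_add_smul, h1, h2, ← add_mul, hab, one_mul]

/-- An extreme point cannot lie strictly (horizontally) between two points of `P`. -/
lemma not_extreme_between {P : Set Pt} {u w z : Pt} (hu : u ∈ P) (hw : w ∈ P)
    (hz : z ∈ P.extremePoints ℝ) (h1 : u 1 = z 1) (h2 : w 1 = z 1)
    (l1 : u 0 < z 0) (l2 : z 0 < w 0) : False := by
  have hseg : z ∈ openSegment ℝ u w := horiz_openSegment h1 h2 l1 l2
  have := (mem_extremePoints.mp hz).2 u hu w hw hseg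
  exact absurd (congrFun this.1 0) (ne_of_lt l1)

/-- An extreme point cannot lie in the open segment of two points with different heights. -/
lemma not_extreme_on_chord {P : Set Pt} {v1 v3 z : Pt} (hv1 : v1 ∈ P) (hv3 : v3 ∈ P)
    (hz : z ∈ P.extremePoints ℝ) (hseg : z ∈ openSegment ℝ v1 v3)
    (hne : v1 1 ≠ z 1) : False := by
  have := (mem_extremePoints.mp hz).2 v1 hv1 v3 hv3 hseg
  exact hne (congrFun this.1 1)

lemma sh_fix {v : Pt} (h : v 1 = 0) : Sh v = v :=
  pt_ext (by rw [Sh_apply0, h, add_zero]) (by rw [Sh_apply1])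

lemma height_ne_zero {v : Pt} (h : Sh v ≠ v) : v 1 ≠ 0 := fun h0 => h (sh_fix h0)

/-- Two "double" extreme vertices cannot share a (nonzero) height — asymmetric version. -/
lemma pair_aux {P : Set Pt} {v w : Pt} (hv : v ∈ P.extremePoints ℝ) (hw : w ∈ P.extremePoints ℝ)
    (hSv : Sh v ∈ P.extremePoints ℝ) (hSw : Sh w ∈ P.extremePoints ℝ)
    (hy : v 1 = w 1) (hy0 : v 1 ≠ 0) (hab : v 0 < w 0) : False := by
  have hvP : v ∈ P := extremePoints_subset hv
  have hwP : w ∈ P := extremePoints_subset hw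
  have hSvP : Sh v ∈ P := extremePoints_subset hSv
  have hSwP : Sh w ∈ P := extremePoints_subset hSw
  rcases lt_trichotomy (v 1) 0 with hyneg | hy0' | hypos
  · exact not_extreme_between hSvP hwP hv (Sh_apply1 v) hy.symm
      (by rw [Sh_apply0]; linarith) hab
  · exact hy0 hy0'
  · rcases lt_trichotomy (Sh v 0) (w 0) with hlt | heq | hgt
    · exact not_extreme_between hvP hwP hSv (Sh_apply1 v).symm (by rw [Sh_apply1, hy])
        (by rw [Sh_apply0]; linarith) hlt
    · exact not_extreme_between hvP hSwP hw hy (Sh_apply1 w) hab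
        (by rw [Sh_apply0]; linarith [hy ▸ hypos])
    · exact not_extreme_between hvP hSvP hw hy (by rw [Sh_apply1, hy]) hab hgt

/-- Two distinct "double" extreme vertices cannot share a nonzero height. -/
lemma pair_lemma {P : Set Pt} {v w : Pt} (hv : v ∈ P.extremePoints ℝ)
    (hw : w ∈ P.extremePoints ℝ)
    (hSv : Sh v ∈ P.extremePoints ℝ) (hSw : Sh w ∈ P.extremePoints ℝ)
    (hy : v 1 = w 1) (hy0 : v 1 ≠ 0) (hne : v ≠ w) : False := by
  rcases lt_trichotomy (v 0) (w 0) with h | h | h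
  · exact pair_aux hv hw hSv hSw hy hy0 h
  · exact hne (pt_ext h hy)
  · exact pair_aux hw hv hSw hSv hy.symm (hy ▸ hy0) h

/-- Three "double" extreme vertices with strictly decreasing heights are impossible. -/
lemma triple_lemma {P : Set Pt} (hP : Convex ℝ P) {v1 v2 v3 : Pt}
    (hv1 : v1 ∈ P.extremePoints ℝ) (hv2 : v2 ∈ P.extremePoints ℝ) (hv3 : v3 ∈ P.extremePoints ℝ)
    (hS1 : Sh v1 ∈ P.extremePoints ℝ) (hS2 : Sh v2 ∈ P.extremePoints ℝ)
    (hS3 : Sh v3 ∈ P.extremePoints ℝ)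
    (h12 : v2 1 < v1 1) (h32 : v3 1 < v2 1) (h20 : v2 1 ≠ 0) : False := by
  have hv1P : v1 ∈ P := extremePoints_subset hv1
  have hv2P : v2 ∈ P := extremePoints_subset hv2
  have hv3P : v3 ∈ P := extremePoints_subset hv3
  have hS1P : Sh v1 ∈ P := extremePoints_subset hS1
  have hS2P : Sh v2 ∈ P := extremePoints_subset hS2
  have hS3P : Sh v3 ∈ P := extremePoints_subset hS3
  set y1 := v1 1 with hy1
  set y2 := v2 1 with hy2
  set y3 := v3 1 with hy3
  have hne13 : y1 - y3 ≠ 0 := by intro h; have := sub_eq_zero.mp h; linarith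
  set lam : ℝ := (y2 - y3) / (y1 - y3) with hlam
  have hkey : lam * (y1 - y3) = y2 - y3 := div_mul_cancel₀ _ hne13
  have hlam0 : 0 < lam := div_pos (by linarith) (by linarith)
  have hlam1 : lam < 1 := (div_lt_one (by linarith)).mpr (by linarith)
  set p : Pt := lam • v1 + (1 - lam) • v3 with hpdef
  set q : Pt := lam • Sh v1 + (1 - lam) • Sh v3 with hqdef
  have hpP : p ∈ P := hP hv1P hv3P (le_of_lt hlam0) (by linarith) (by ring)
  have hqP : q ∈ P := hP hS1P hS3P (le_of_lt hlam0) (by linarith) (by ring)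
  have hpseg : p ∈ openSegment ℝ v1 v3 := ⟨lam, 1 - lam, hlam0, by linarith, by ring, rfl⟩
  have hqseg : q ∈ openSegment ℝ (Sh v1) (Sh v3) :=
    ⟨lam, 1 - lam, hlam0, by linarith, by ring, rfl⟩
  have hp1 : p 1 = y2 := by
    rw [hpdef, pt_coord_add_smul]; linear_combination hkey
  have hq1 : q 1 = y2 := by
    rw [hqdef, pt_coord_add_smul, Sh_apply1, Sh_apply1]; linear_combination hkey
  have hq0 : q 0 = p 0 + y2 := by
    rw [hqdef, hpdef, pt_coord_add_smul, pt_coord_add_smul, Sh_apply0, Sh_apply0]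
    linear_combination hkey
  set L := p 0 with hL
  set a := v2 0 with ha
  set t := y2 with ht
  have hSv20 : Sh v2 0 = a + t := by rw [Sh_apply0]
  have hSv21 : Sh v2 1 = t := by rw [Sh_apply1]
  have hchord_p : ∀ z : Pt, z ∈ P.extremePoints ℝ → z = p → False := by
    intro z hz hzp
    exact not_extreme_on_chord hv1P hv3P hz (hzp ▸ hpseg) (by rw [hzp, hp1]; exact ne_of_gt h12)
  have hchord_q : ∀ z : Pt, z ∈ P.extremePoints ℝ → z = q → False := by
    intro z hz hzq
    refine not_extreme_on_chord hS1P hS3P hz (hzq ▸ hqseg) ?_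
    rw [hzq, hq1, Sh_apply1]; exact ne_of_gt h12
  rcases lt_trichotomy t 0 with htneg | ht0 | htpos
  · rcases lt_trichotomy a L with haL | haL | haL
    · rcases lt_trichotomy a (L + t) with h2' | h2' | h2'
      · exact not_extreme_between hS2P hqP hv2 hSv21 (by rw [hq1]) (by rw [hSv20]; linarith)
          (by rw [hq0]; linarith)
      · exact hchord_q v2 hv2 (pt_ext (by rw [hq0]; linarith) (by rw [hq1]))
      · exact not_extreme_between hqP hpP hv2 (by rw [hq1]) hp1 (by rw [hq0]; linarith) haL
    · exact hchord_p v2 hv2 (pt_ext haL hp1.symm)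
    · rcases lt_trichotomy (a + t) L with h2' | h2' | h2'
      · exact not_extreme_between hqP hpP hS2 (by rw [hq1, hSv21]) (by rw [hp1, hSv21])
          (by rw [hq0, hSv20]; linarith) (by rw [hSv20]; linarith)
      · exact hchord_p (Sh v2) hS2 (pt_ext (by rw [hSv20]; linarith) (by rw [hSv21, hp1]))
      · exact not_extreme_between hpP hv2P hS2 (by rw [hp1, hSv21]) (by rw [hSv21])
          (by rw [hSv20]; linarith) (by rw [hSv20]; linarith)
  · exact h20 ht0
  · rcases lt_trichotomy a L with haL | haL | haL
    · rcases lt_trichotomy (a + t) L with h2' | h2' | h2'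
      · exact not_extreme_between hv2P hpP hS2 hSv21.symm (by rw [hp1, hSv21])
          (by rw [hSv20]; linarith) (by rw [hSv20]; linarith)
      · exact hchord_p (Sh v2) hS2 (pt_ext (by rw [hSv20]; linarith) (by rw [hSv21, hp1]))
      · exact not_extreme_between hpP hqP hS2 (by rw [hp1, hSv21]) (by rw [hq1, hSv21])
          (by rw [hSv20]; linarith) (by rw [hSv20, hq0]; linarith)
    · exact hchord_p v2 hv2 (pt_ext haL hp1.symm)
    · rcases lt_trichotomy a (L + t) with h2' | h2' | h2'
      · exact not_extreme_between hpP hqP hv2 hp1 (by rw [hq1]) haL (by rw [hq0]; linarith)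
      · exact hchord_q v2 hv2 (pt_ext (by rw [hq0]; linarith) (by rw [hq1]))
      · exact not_extreme_between hqP hS2P hv2 (by rw [hq1]) hSv21 (by rw [hq0]; linarith)
          (by rw [hSv20]; linarith)

/-- At most two extreme points `v` of a convex `P` can have `Sh v` extreme as well. -/
lemma doubles_le_two {P : Set Pt} (hP : Convex ℝ P)
    (hfin : {v : Pt | v ∈ P.extremePoints ℝ ∧ Sh v ∈ P.extremePoints ℝ ∧ Sh v ≠ v}.Finite) :
    {v : Pt | v ∈ P.extremePoints ℝ ∧ Sh v ∈ P.extremePoints ℝ ∧ Sh v ≠ v}.ncard ≤ 2 := by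
  by_contra hcon
  push_neg at hcon
  obtain ⟨A, hA, B, hB, C, hC, hAB, hAC, hBC⟩ := (Set.two_lt_ncard hfin).mp hcon
  obtain ⟨hA1, hA2, hA3⟩ := hA
  obtain ⟨hB1, hB2, hB3⟩ := hB
  obtain ⟨hC1, hC2, hC3⟩ := hC
  have hA0 : A 1 ≠ 0 := height_ne_zero hA3
  have hB0 : B 1 ≠ 0 := height_ne_zero hB3
  have hC0 : C 1 ≠ 0 := height_ne_zero hC3
  have hABh : A 1 ≠ B 1 := fun h => pair_lemma hA1 hB1 hA2 hB2 h hA0 hAB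
  have hACh : A 1 ≠ C 1 := fun h => pair_lemma hA1 hC1 hA2 hC2 h hA0 hAC
  have hBCh : B 1 ≠ C 1 := fun h => pair_lemma hB1 hC1 hB2 hC2 h hB0 hBC
  rcases lt_trichotomy (A 1) (B 1) with h1 | h1 | h1
  · rcases lt_trichotomy (B 1) (C 1) with h2 | h2 | h2
    · exact triple_lemma hP hC1 hB1 hA1 hC2 hB2 hA2 h2 h1 hB0
    · exact absurd h2 hBCh
    · rcases lt_trichotomy (A 1) (C 1) with h3 | h3 | h3
      · exact triple_lemma hP hB1 hC1 hA1 hB2 hC2 hA2 h2 h3 hC0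
      · exact absurd h3 hACh
      · exact triple_lemma hP hB1 hA1 hC1 hB2 hA2 hC2 h1 h3 hA0
  · exact absurd h1 hABh
  · rcases lt_trichotomy (B 1) (C 1) with h2 | h2 | h2
    · rcases lt_trichotomy (A 1) (C 1) with h3 | h3 | h3
      · exact triple_lemma hP hC1 hA1 hB1 hC2 hA2 hB2 h3 h1 hA0
      · exact absurd h3 hACh
      · exact triple_lemma hP hA1 hC1 hB1 hA2 hC2 hB2 h3 h2 hC0
    · exact absurd h2 hBCh
    · exact triple_lemma hP hA1 hB1 hC1 hA2 hB2 hC2 h1 h2 hB0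

lemma extremePoints_mono' {A B : Set Pt} (hAB : A ⊆ B) {x : Pt}
    (hx : x ∈ B.extremePoints ℝ) (hxA : x ∈ A) : x ∈ A.extremePoints ℝ :=
  ⟨hxA, fun y hy z hz h => ((mem_extremePoints.mp hx).2 y (hAB hy) z (hAB hz) h).1⟩

lemma ext_image_Sh (X : Set Pt) :
    (convexHull ℝ (Sh '' X)).extremePoints ℝ = Sh '' ((convexHull ℝ X).extremePoints ℝ) := by
  have h1 : Sh '' (convexHull ℝ X) = convexHull ℝ (Sh '' X) := by
    have := shEquiv.toLinearMap.image_convexHull X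
    exact this
  rw [← h1]
  have := image_extremePoints shEquiv (convexHull ℝ X)
  exact this.symm

lemma ext_image_M1 (X : Set Pt) :
    (convexHull ℝ (M1.mulVec '' X)).extremePoints ℝ
      = M1.mulVec '' ((convexHull ℝ X).extremePoints ℝ) := by
  have h1 : M1.mulVec '' (convexHull ℝ X) = convexHull ℝ (M1.mulVec '' X) := by
    have := swEquiv.toLinearMap.image_convexHull X
    exact this
  rw [← h1]
  have := image_extremePoints swEquiv (convexHull ℝ X)
  exact this.symm

/-- The key step: taking the hull of a set together with its shear image adds at most
two extreme points. -/
lemma step_lemma {Y : Set Pt} (hY : Y.Finite) :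
    ((convexHull ℝ (Y ∪ Sh '' Y)).extremePoints ℝ).ncard
      ≤ ((convexHull ℝ Y).extremePoints ℝ).ncard + 2 := by
  set E := (convexHull ℝ Y).extremePoints ℝ with hE
  set Hs := (convexHull ℝ (Y ∪ Sh '' Y)).extremePoints ℝ with hHs
  have hEY : E ⊆ Y := extremePoints_convexHull_subset
  have hEfin : E.Finite := hY.subset hEY
  have hHsub : Hs ⊆ Y ∪ Sh '' Y := extremePoints_convexHull_subset
  have hHfin : Hs.Finite := (hY.union (hY.image Sh)).subset hHsub
  have hkey : Hs ⊆ E ∪ Sh '' E := by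
    intro x hx
    rcases hHsub hx with hxY | hxSY
    · exact Or.inl (extremePoints_mono' (convexHull_mono subset_union_left) hx
        (subset_convexHull ℝ Y hxY))
    · right
      have hx' : x ∈ (convexHull ℝ (Sh '' Y)).extremePoints ℝ :=
        extremePoints_mono' (convexHull_mono subset_union_right) hx
          (subset_convexHull ℝ _ hxSY)
      rw [ext_image_Sh] at hx'
      exact hx'
  set D := {v : Pt | v ∈ Hs ∧ Sh v ∈ Hs ∧ Sh v ≠ v} with hD
  have hDsub : D ⊆ Hs := fun v hv => hv.1
  have hDfin : D.Finite := hHfin.subset hDsub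
  have hD2 : D.ncard ≤ 2 := doubles_le_two (convex_convexHull ℝ _) hDfin
  have hsplit : Hs = (Hs ∩ E) ∪ (Hs \ E) := (Set.inter_union_diff Hs E).symm
  have hsub2 : Hs \ E ⊆ Sh '' ((E \ Hs) ∪ D) := by
    rintro x ⟨hx, hxE⟩
    rcases hkey hx with h | ⟨u, huE, rfl⟩
    · exact absurd h hxE
    · by_cases hu : u ∈ Hs
      · exact ⟨u, Or.inr ⟨hu, hx, fun h => hxE (h.symm ▸ huE)⟩, rfl⟩
      · exact ⟨u, Or.inl ⟨huE, hu⟩, rfl⟩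
  have h1 : Hs.ncard ≤ (Hs ∩ E).ncard + (Hs \ E).ncard := by
    calc Hs.ncard = ((Hs ∩ E) ∪ (Hs \ E)).ncard := by rw [← hsplit]
    _ ≤ _ := Set.ncard_union_le _ _
  have h2 : (Hs \ E).ncard ≤ (E \ Hs).ncard + 2 := by
    calc (Hs \ E).ncard ≤ (Sh '' ((E \ Hs) ∪ D)).ncard :=
          Set.ncard_le_ncard hsub2 (((hEfin.diff).union hDfin).image _)
    _ = ((E \ Hs) ∪ D).ncard := Set.ncard_image_of_injective _ Sh_inj
    _ ≤ (E \ Hs).ncard + D.ncard := Set.ncard_union_le _ _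
    _ ≤ (E \ Hs).ncard + 2 := by omega
  have h3 : (Hs ∩ E).ncard + (E \ Hs).ncard ≤ E.ncard := by
    have hdisj : Disjoint (Hs ∩ E) (E \ Hs) :=
      Set.disjoint_sdiff_right.mono_left Set.inter_subset_left
    calc (Hs ∩ E).ncard + (E \ Hs).ncard = ((Hs ∩ E) ∪ (E \ Hs)).ncard :=
          (Set.ncard_union_eq hdisj (hEfin.subset Set.inter_subset_right)
            (hEfin.diff)).symm
    _ ≤ E.ncard := Set.ncard_le_ncard
          (union_subset Set.inter_subset_right Set.diff_subset) hEfin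
  omega

lemma XSeq_finite (a : Pt) : ∀ k : ℕ, (XSeq {M1, M4} a k).Finite := by
  intro k
  induction k with
  | zero => exact Set.finite_singleton a
  | succ n ih =>
      show (⋃ A ∈ ({M1, M4} : Set (Matrix (Fin 2) (Fin 2) ℝ)), A.mulVec '' XSeq {M1, M4} a n).Finite
      rw [Set.biUnion_pair]
      exact (ih.image _).union (ih.image _)

lemma XSeq_succ (a : Pt) (k : ℕ) :
    XSeq {M1, M4} a (k + 1)
      = (M1.mulVec '' XSeq {M1, M4} a k) ∪ Sh '' (M1.mulVec '' XSeq {M1, M4} a k) := by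
  show (⋃ A ∈ ({M1, M4} : Set (Matrix (Fin 2) (Fin 2) ℝ)), A.mulVec '' XSeq {M1, M4} a k) = _
  rw [Set.biUnion_pair]
  congr 1
  rw [← Set.image_comp]
  refine Set.image_congr fun x _ => ?_
  exact M4_decomp x

lemma NExt_step (a : Pt) (k : ℕ) :
    NExt {M1, M4} a (k + 1) ≤ NExt {M1, M4} a k + 2 := by
  have hfin := XSeq_finite a k
  unfold NExt EPts PHull
  rw [XSeq_succ]
  calc ((convexHull ℝ ((M1.mulVec '' XSeq {M1, M4} a k)
          ∪ Sh '' (M1.mulVec '' XSeq {M1, M4} a k))).extremePoints ℝ).ncard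
      ≤ ((convexHull ℝ (M1.mulVec '' XSeq {M1, M4} a k)).extremePoints ℝ).ncard + 2 :=
        step_lemma (hfin.image _)
    _ = ((convexHull ℝ (XSeq {M1, M4} a k)).extremePoints ℝ).ncard + 2 := by
        have hinj : Function.Injective (M1.mulVec : Pt → Pt) := swEquiv.injective
        rw [ext_image_M1, Set.ncard_image_of_injective _ hinj]

lemma NExt_two (a : Pt) : NExt {M1, M4} a 2 ≤ 4 := by
  have h1 : XSeq {M1, M4} a 1 = {M1.mulVec a, M4.mulVec a} := by
    show (⋃ A ∈ ({M1, M4} : Set (Matrix (Fin 2) (Fin 2) ℝ)), A.mulVec '' XSeq {M1, M4} a 0) = _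
    rw [Set.biUnion_pair]
    show M1.mulVec '' {a} ∪ M4.mulVec '' {a} = _
    rw [Set.image_singleton, Set.image_singleton, Set.singleton_union]
  have h2 : XSeq {M1, M4} a 2 ⊆
      {M1.mulVec (M1.mulVec a), M1.mulVec (M4.mulVec a),
       M4.mulVec (M1.mulVec a), M4.mulVec (M4.mulVec a)} := by
    show (⋃ A ∈ ({M1, M4} : Set (Matrix (Fin 2) (Fin 2) ℝ)), A.mulVec '' XSeq {M1, M4} a 1) ⊆ _
    rw [Set.biUnion_pair, h1]
    rintro x (⟨u, hu, rfl⟩ | ⟨u, hu, rfl⟩) <;> rcases hu with rfl | rfl <;> simp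
  have hsub : EPts {M1, M4} a 2 ⊆
      {M1.mulVec (M1.mulVec a), M1.mulVec (M4.mulVec a),
       M4.mulVec (M1.mulVec a), M4.mulVec (M4.mulVec a)} :=
    fun x hx => h2 (extremePoints_convexHull_subset hx)
  calc NExt {M1, M4} a 2
      ≤ ({M1.mulVec (M1.mulVec a), M1.mulVec (M4.mulVec a),
          M4.mulVec (M1.mulVec a), M4.mulVec (M4.mulVec a)} : Set Pt).ncard :=
        Set.ncard_le_ncard hsub (Set.toFinite _)
    _ ≤ 4 := by
        have e1 := Set.ncard_insert_le (M1.mulVec (M1.mulVec a))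
          ({M1.mulVec (M4.mulVec a), M4.mulVec (M1.mulVec a), M4.mulVec (M4.mulVec a)} : Set Pt)
        have e2 := Set.ncard_insert_le (M1.mulVec (M4.mulVec a))
          ({M4.mulVec (M1.mulVec a), M4.mulVec (M4.mulVec a)} : Set Pt)
        have e3 := Set.ncard_insert_le (M4.mulVec (M1.mulVec a))
          ({M4.mulVec (M4.mulVec a)} : Set Pt)
        have e4 := Set.ncard_singleton (M4.mulVec (M4.mulVec a))
        omega

lemma NExt_le_linear (a : Pt) : ∀ k : ℕ, 2 ≤ k → NExt {M1, M4} a k ≤ 2 * k := by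
  intro k hk
  induction k, hk using Nat.le_induction with
  | base => simpa using NExt_two a
  | succ n hn ih =>
      calc NExt {M1, M4} a (n + 1) ≤ NExt {M1, M4} a n + 2 := NExt_step a n
        _ ≤ 2 * n + 2 := by omega
        _ = 2 * (n + 1) := by ring

/-- `N_k(Σ₂, a) ≤ 8k - 12` for all `a` and `k ≥ 2`, where `Σ₂ = {A₁, A₄}`; consequently
`N_k(Σ₂, a) = O(k)` uniformly in `a`. -/
theorem stmt15 :
    (∀ a : Fin 2 → ℝ, ∀ k : ℕ, 2 ≤ k → NExt {M1, M4} a k ≤ 8 * k - 12) ∧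
    (∃ α : ℝ, 0 < α ∧ ∃ k₀ : ℕ, ∀ a : Fin 2 → ℝ, ∀ k : ℕ, k₀ ≤ k →
      (NExt {M1, M4} a k : ℝ) ≤ α * (k : ℝ)) := by
  constructor
  · intro a k hk
    have := NExt_le_linear a k hk
    omega
  · refine ⟨8, by norm_num, 2, fun a k hk => ?_⟩
    have h := NExt_le_linear a k hk
    have hcast : (NExt {M1, M4} a k : ℝ) ≤ (2 * k : ℕ) := Nat.cast_le.mpr h
    have : ((2 * k : ℕ) : ℝ) ≤ 8 * (k : ℝ) := by
      push_cast
      have : (0:ℝ) ≤ (k : ℝ) := Nat.cast_nonneg k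
      linarith
    linarith

end
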